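/- Elegance is undecidable: the predicate on codes given by 'c is elegant', i.e., every code c' with c'.eval = c.eval satisfies encode c ≤ encode c', is not a computable predicate. -/

import Mathlib

/-- A code is elegant if no smaller code computes the same partial function. -/
def Elegant (c : Nat.Partrec.Code) : Prop :=
  ∀ c' : Nat.Partrec.Code, c'.eval = c.eval →
    Encodable.encode c ≤ Encodable.encode c'

open Nat.Partrec Nat.Partrec.Code Encodable

/-- There are elegant codes of arbitrarily large size. -/
lemma exists_elegant_gt (N : ℕ) : ∃ e : Code, Elegant e ∧ N < encode e := by
  classical
  have hq : ∀ n : ℕ, ∃ k, (Denumerable.ofNat Code k).eval = (Code.const n).eval := fun n =>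
    ⟨encode (Code.const n), by simp⟩
  set e : ℕ → Code := fun n => Denumerable.ofNat Code (Nat.find (hq n)) with he_def
  have he : ∀ n, (e n).eval = (Code.const n).eval := fun n => Nat.find_spec (hq n)
  have hencode : ∀ n, encode (e n) = Nat.find (hq n) := fun n => by
    simp [he_def]
  have heleg : ∀ n, Elegant (e n) := by
    intro n c' hc'
    have h1 : (Denumerable.ofNat Code (encode c')).eval = (Code.const n).eval := by
      simpa using hc'.trans (he n)
    have := Nat.find_min' (hq n) h1
    simpa [hencode] using this
  have hinj : Function.Injective e := by
    intro a b hab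
    have h2 : (Code.const a).eval = (Code.const b).eval := (he a).symm.trans (hab ▸ he b)
    have h3 := congrFun h2 0
    simp only [eval_const] at h3
    exact Part.some_inj.1 h3
  by_contra h
  push_neg at h
  have hbd : ∀ n, encode (e n) ≤ N := fun n => h _ (heleg n)
  have : Function.Injective fun n : ℕ => (⟨encode (e n), Nat.lt_succ_of_le (hbd n)⟩ : Fin (N + 1)) := by
    intro a b hab
    exact hinj (encode_injective (by simpa using congrArg Fin.val hab))
  exact (instInfiniteNat).not_finite (Finite.of_injective _ this)

theorem elegance_undecidable : ¬ ComputablePred Elegant := by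
  classical
  intro hcomp
  obtain ⟨f, hf, hpf⟩ := ComputablePred.computable_iff.1 hcomp
  have hfe : ∀ c : Code, f c = true ↔ Elegant c := by
    intro c; rw [hpf]
  set g : Code → ℕ → Bool := fun c k => decide (encode c < k) && f (Denumerable.ofNat Code k)
    with hg_def
  have hex : ∀ c : Code, ∃ k, g c k = true := by
    intro c
    obtain ⟨e, he, hN⟩ := exists_elegant_gt (encode c)
    refine ⟨encode e, ?_⟩
    simp [hg_def, hN, (hfe e).2 he]
  -- computability of g
  have hgc : Computable₂ g := by
    have h1 : Computable fun p : Code × ℕ => decide (encode p.1 < p.2) :=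
      (Primrec.nat_lt.comp (Primrec.encode.comp Primrec.fst) Primrec.snd).decide.to_comp
    have h2 : Computable fun p : Code × ℕ => f (Denumerable.ofNat Code p.2) :=
      hf.comp ((Computable.ofNat _).comp Computable.snd)
    exact ((Primrec.dom_bool₂ (· && ·)).to_comp.comp h1 h2 : _)
  have hrf : Partrec fun c : Code => Nat.rfind fun k => Part.some (g c k) :=
    Partrec.rfind hgc.partrec₂
  have hFn : Computable fun c : Code => Nat.find (hex c) := by
    refine hrf.of_eq_tot fun c => ?_
    refine Nat.mem_rfind.2 ⟨?_, ?_⟩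
    · simpa using Nat.find_spec (hex c)
    · intro m hm
      have h4 := Nat.find_min (hex c) hm
      have h5 : g c m = false := eq_false_of_ne_true h4
      simpa using Part.mem_some_iff.2 h5.symm
  have hF : Computable fun c : Code => Denumerable.ofNat Code (Nat.find (hex c)) :=
    (Computable.ofNat _).comp hFn
  obtain ⟨c, hc⟩ := Nat.Partrec.Code.fixed_point hF
  set k := Nat.find (hex c) with hk
  have hspec : g c k = true := Nat.find_spec (hex c)
  rw [hg_def] at hspec
  simp only [Bool.and_eq_true, decide_eq_true_eq] at hspec
  have heleg : Elegant (Denumerable.ofNat Code k) := (hfe _).1 hspec.2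
  have := heleg c hc.symm
  simp only [Denumerable.encode_ofNat] at this
  exact absurd this (not_le.2 hspec.1)
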